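/- Let T > 0, let f : ℝ → ℝ be a continuously differentiable T-periodic function, and let α ∈ (0,1). If the Caputo fractional derivative ᶜD^α f(t) = (1/Γ(1−α)) ∫₀ᵗ (t−s)^{−α} f′(s) ds is bounded on (0,∞), then ᶜD^α f is S-asymptotically T-periodic: it is continuous and bounded on (0,∞) and lim_{t→+∞} [ᶜD^α f(t+T) − ᶜD^α f(t)] = 0. -/

import Mathlib

open MeasureTheory intervalIntegral Filter Set

/-- If `f` is a continuously differentiable `T`-periodic function, `α ∈ (0,1)`, and the
Caputo fractional derivative `ᶜD^α f` is bounded on `(0,∞)`, then `ᶜD^α f` is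
S-asymptotically `T`-periodic: continuous and bounded on `(0,∞)` with
`ᶜD^α f (t+T) - ᶜD^α f (t) → 0` as `t → +∞`. -/
theorem caputo_derivative_s_asymptotically_periodic (T : ℝ) (hT : 0 < T)
    (f : ℝ → ℝ) (hf : ContDiff ℝ 1 f) (hper : Function.Periodic f T)
    (α : ℝ) (hα : α ∈ Set.Ioo (0 : ℝ) 1)
    (cD : ℝ → ℝ)
    (hcD : ∀ t : ℝ, cD t =
      (1 / Real.Gamma (1 - α)) * ∫ s in (0 : ℝ)..t, (t - s) ^ (-α) * deriv f s)
    (hbdd : ∃ M : ℝ, ∀ t ∈ Ioi (0 : ℝ), |cD t| ≤ M) :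
    ContinuousOn cD (Ioi 0) ∧ (∃ M : ℝ, ∀ t ∈ Ioi (0 : ℝ), |cD t| ≤ M) ∧
      Tendsto (fun t : ℝ => cD (t + T) - cD t) atTop (nhds 0) := by
  obtain ⟨hα0, hα1⟩ := hα
  set g := deriv f with hg
  have hgc : Continuous g := hf.continuous_deriv le_rfl
  have hgper : Function.Periodic g T := by
    intro x
    have hfe : (fun y => f (y + T)) = f := funext fun y => hper y
    calc g (x + T) = deriv (fun y => f (y + T)) x := (deriv_comp_add_const f T x).symm
    _ = g x := by rw [hfe]
  obtain ⟨C, hC⟩ : ∃ C : ℝ, ∀ s : ℝ, |g s| ≤ C := by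
    obtain ⟨C, hC⟩ := (isCompact_Icc (a := (0:ℝ)) (b := T)).exists_bound_of_continuousOn
      hgc.continuousOn
    refine ⟨C, fun s => ?_⟩
    obtain ⟨y, hy, hxy⟩ := hgper.exists_mem_Ico hT s 0
    rw [hxy]
    simpa [Real.norm_eq_abs] using hC y ⟨hy.1, by linarith [hy.2]⟩
  have hC0 : 0 ≤ C := le_trans (abs_nonneg _) (hC 0)
  -- integrability of the rpow kernel
  have hrpow : ∀ a t : ℝ, IntervalIntegrable (fun s : ℝ => (t - s) ^ (-α)) volume a t := by
    intro a t
    have h1 : IntervalIntegrable (fun x : ℝ => x ^ (-α)) volume 0 (t - a) :=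
      intervalIntegrable_rpow' (by linarith)
    have h2 := h1.comp_sub_left t
    simp only [sub_zero, sub_sub_cancel] at h2
    exact h2.symm
  have hint : ∀ a t : ℝ, IntervalIntegrable (fun s => (t - s) ^ (-α) * g s) volume a t :=
    fun a t => (hrpow a t).mul_continuousOn hgc.continuousOn
  -- continuity
  have hG : Continuous fun t : ℝ => ∫ v in (0:ℝ)..1, (1 - v) ^ (-α) * g (t * v) := by
    apply intervalIntegral.continuous_of_dominated_interval
      (bound := fun v : ℝ => (1 - v) ^ (-α) * C)
    · intro x
      exact (((measurable_id.const_sub 1).pow measurable_const).mul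
        (hgc.comp (continuous_const.mul continuous_id)).measurable).aestronglyMeasurable
    · intro x
      filter_upwards with v hv
      rw [Set.uIoc_of_le (by norm_num : (0:ℝ) ≤ 1)] at hv
      have h1v : (0:ℝ) ≤ 1 - v := by linarith [hv.2]
      have hnn : (0:ℝ) ≤ (1 - v) ^ (-α) := Real.rpow_nonneg h1v _
      rw [Real.norm_eq_abs, abs_mul, abs_of_nonneg hnn]
      exact mul_le_mul_of_nonneg_left (hC _) hnn
    · have h1 : IntervalIntegrable (fun v : ℝ => (1 - v) ^ (-α)) volume 0 1 := by
        have h0 : IntervalIntegrable (fun x : ℝ => x ^ (-α)) volume 0 1 :=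
          intervalIntegrable_rpow' (by linarith)
        have h2 := h0.comp_sub_left 1
        simpa using h2.symm
      exact h1.mul_const C
    · filter_upwards with v _
      exact continuous_const.mul (hgc.comp (continuous_id.mul continuous_const))
  have hkey : ∀ t : ℝ, 0 < t → cD t = (1 / Real.Gamma (1 - α)) *
      (t ^ ((1:ℝ) - α) * ∫ v in (0:ℝ)..1, (1 - v) ^ (-α) * g (t * v)) := by
    intro t ht
    rw [hcD t]
    congr 1
    have h1 : t • ∫ v in (0:ℝ)..1, (fun s => (t - s) ^ (-α) * g s) (t * v)
        = ∫ s in (t*0)..(t*1), (t - s) ^ (-α) * g s :=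
      intervalIntegral.smul_integral_comp_mul_left (a := 0) (b := 1) (fun s => (t - s) ^ (-α) * g s) t
    simp only [mul_zero, mul_one, smul_eq_mul] at h1
    rw [← h1]
    have h2 : ∫ v in (0:ℝ)..1, (t - t * v) ^ (-α) * g (t * v)
        = t ^ (-α) * ∫ v in (0:ℝ)..1, (1 - v) ^ (-α) * g (t * v) := by
      rw [← intervalIntegral.integral_const_mul]
      apply intervalIntegral.integral_congr
      intro v hv
      dsimp only
      rw [Set.uIcc_of_le (by norm_num : (0:ℝ) ≤ 1)] at hv
      have h1v : (0:ℝ) ≤ 1 - v := by linarith [hv.2]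
      have he : t - t * v = t * (1 - v) := by ring
      rw [he, Real.mul_rpow ht.le h1v]
      ring
    rw [h2, ← mul_assoc]
    congr 1
    rw [show (1:ℝ) - α = 1 + (-α) by ring, Real.rpow_add ht, Real.rpow_one]
  have hcont : ContinuousOn cD (Ioi 0) := by
    have hc2 : ContinuousOn (fun t : ℝ => (1 / Real.Gamma (1 - α)) *
        (t ^ ((1:ℝ) - α) * ∫ v in (0:ℝ)..1, (1 - v) ^ (-α) * g (t * v))) (Ioi 0) := by
      refine continuousOn_const.mul (ContinuousOn.mul ?_ hG.continuousOn)
      intro t ht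
      exact (Real.continuousAt_rpow_const t _ (Or.inl (ne_of_gt ht))).continuousWithinAt
    exact hc2.congr fun t ht => hkey t ht
  have hdiff : ∀ t : ℝ, 0 < t → cD (t + T) - cD t =
      (1 / Real.Gamma (1 - α)) * ∫ u in (-T)..(0:ℝ), (t - u) ^ (-α) * g u := by
    intro t ht
    rw [hcD (t + T), hcD t, ← mul_sub]
    congr 1
    have hA : (∫ s in (0:ℝ)..(t + T), (t + T - s) ^ (-α) * g s)
        = ∫ u in (-T)..t, (t - u) ^ (-α) * g u := by
      have h1 := intervalIntegral.integral_comp_add_right (a := -T) (b := t)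
        (fun s => (t + T - s) ^ (-α) * g s) T
      rw [neg_add_cancel] at h1
      rw [← h1]
      apply intervalIntegral.integral_congr
      intro u _
      simp only
      rw [show t + T - (u + T) = t - u by ring, hgper u]
    have hI1 : IntervalIntegrable (fun s => (t - s) ^ (-α) * g s) volume (-T) 0 :=
      (hint (-T) t).mono_set (by
        rw [Set.uIcc_of_le (by linarith : -T ≤ (0:ℝ)), Set.uIcc_of_le (by linarith : -T ≤ t)]
        exact Set.Icc_subset_Icc_right (by linarith))
    rw [hA, ← integral_add_adjacent_intervals hI1 (hint 0 t)]
    ring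
  have htend : Tendsto (fun t : ℝ => cD (t + T) - cD t) atTop (nhds 0) := by
    apply squeeze_zero_norm' (a := fun t : ℝ => |1 / Real.Gamma (1 - α)| * (C * t ^ (-α) * T))
    · filter_upwards [eventually_gt_atTop (0:ℝ)] with t ht
      rw [hdiff t ht, Real.norm_eq_abs, abs_mul]
      refine mul_le_mul_of_nonneg_left ?_ (abs_nonneg _)
      have hb : ∀ u ∈ Set.uIoc (-T) (0:ℝ), ‖(t - u) ^ (-α) * g u‖ ≤ C * t ^ (-α) := by
        intro u hu
        rw [Set.uIoc_of_le (by linarith : -T ≤ (0:ℝ))] at hu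
        have h1 : t ≤ t - u := by linarith [hu.2]
        have h2 : (t - u) ^ (-α) ≤ t ^ (-α) :=
          Real.rpow_le_rpow_of_nonpos ht h1 (by linarith)
        rw [Real.norm_eq_abs, abs_mul,
          abs_of_nonneg (Real.rpow_nonneg (by linarith : (0:ℝ) ≤ t - u) _)]
        calc (t - u) ^ (-α) * |g u| ≤ t ^ (-α) * C :=
              mul_le_mul h2 (hC u) (abs_nonneg _) (Real.rpow_nonneg ht.le _)
        _ = C * t ^ (-α) := mul_comm _ _
      calc |∫ u in (-T)..(0:ℝ), (t - u) ^ (-α) * g u|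
          ≤ C * t ^ (-α) * |0 - (-T)| :=
            intervalIntegral.norm_integral_le_of_norm_le_const hb
      _ = C * t ^ (-α) * T := by simp [abs_of_pos hT]
    · have h0 : Tendsto (fun t : ℝ => t ^ (-α)) atTop (nhds 0) := tendsto_rpow_neg_atTop hα0
      have h1 := ((h0.const_mul C).mul_const T).const_mul |1 / Real.Gamma (1 - α)|
      simpa using h1
  exact ⟨hcont, hbdd, htend⟩
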